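/- Let K be symmetric positive semidefinite, s > 0, k_* ∈ ℝⁿ, κ ≥ 0 with [[κ, k_*ᵀ],[k_*, K]] positive semidefinite. Define v(α) = α·(κ - k_*ᵀ(K + (s/α)I)⁻¹k_*) for α ∈ (0,1]. Then v is nondecreasing in α. -/

import Mathlib

open Matrix

-- scalar smul preserves PSD
lemma rio_psd_smul {n : ℕ} {A : Matrix (Fin n) (Fin n) ℝ} (hA : A.PosSemidef)
    {c : ℝ} (hc : 0 ≤ c) : (c • A).PosSemidef := by
  refine posSemidef_iff_dotProduct_mulVec.mpr ⟨?_, ?_⟩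
  · unfold Matrix.IsHermitian
    rw [conjTranspose_smul, hA.isHermitian.eq]
    simp
  · intro x
    rw [smul_mulVec, dotProduct_smul]
    exact mul_nonneg hc (by simpa using hA.dotProduct_mulVec_nonneg x)

-- quadratic form bound from bordered PSD
lemma rio_discrim {n : ℕ} (K : Matrix (Fin n) (Fin n) ℝ) (κ : ℝ) (kstar : Fin n → ℝ)
    (hbord : (Matrix.fromBlocks
        (Matrix.of fun _ _ : Unit => κ)
        (Matrix.of fun (_ : Unit) i => kstar i)
        (Matrix.of fun i (_ : Unit) => kstar i)
        K).PosSemidef) (u : Fin n → ℝ) :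
    (kstar ⬝ᵥ u) ^ 2 ≤ κ * (u ⬝ᵥ K.mulVec u) := by
  have key : ∀ r : ℝ, 0 ≤ κ * (r * r) + (2 * (kstar ⬝ᵥ u)) * r + u ⬝ᵥ K.mulVec u := by
    intro r
    have h := hbord.dotProduct_mulVec_nonneg (Sum.elim (fun _ => r) u)
    rw [fromBlocks_mulVec] at h
    simp only [star_trivial, Sum.elim_comp_inl, Sum.elim_comp_inr] at h
    rw [sumElim_dotProduct_sumElim] at h
    simp only [dotProduct_add] at h
    have h1 : ((fun _ => r) : Unit → ℝ) ⬝ᵥ ((Matrix.of fun _ _ : Unit => κ) *ᵥ fun _ => r) = κ * (r * r) := by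
      simp [Matrix.mulVec, dotProduct]
      ring
    have h2 : ((fun _ => r) : Unit → ℝ) ⬝ᵥ ((Matrix.of fun (_ : Unit) i => kstar i) *ᵥ u) = r * (kstar ⬝ᵥ u) := by
      simp [Matrix.mulVec, dotProduct]
    have h3 : u ⬝ᵥ ((Matrix.of fun i (_ : Unit) => kstar i) *ᵥ fun _ => r) = r * (kstar ⬝ᵥ u) := by
      simp [Matrix.mulVec, dotProduct, Finset.mul_sum]
      exact Finset.sum_congr rfl fun i _ => by ring
    rw [h1, h2, h3] at h
    linarith
  have hd := discrim_le_zero key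
  unfold discrim at hd
  nlinarith [hd]
theorem predictive_variance_monotone_in_signal
    {n : ℕ} (K : Matrix (Fin n) (Fin n) ℝ) (κ s : ℝ) (kstar : Fin n → ℝ)
    (hK : K.PosSemidef) (hκ : 0 ≤ κ) (hs : 0 < s)
    (hbord : (Matrix.fromBlocks
        (Matrix.of fun _ _ : Unit => κ)
        (Matrix.of fun (_ : Unit) i => kstar i)
        (Matrix.of fun i (_ : Unit) => kstar i)
        K).PosSemidef) :
    ∀ α₁ ∈ Set.Ioc (0 : ℝ) 1, ∀ α₂ ∈ Set.Ioc (0 : ℝ) 1, α₁ ≤ α₂ →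
      α₁ * (κ - kstar ⬝ᵥ (K + (s / α₁) • (1 : Matrix (Fin n) (Fin n) ℝ))⁻¹.mulVec kstar)
        ≤ α₂ * (κ - kstar ⬝ᵥ (K + (s / α₂) • (1 : Matrix (Fin n) (Fin n) ℝ))⁻¹.mulVec kstar) := by
  intro α₁ hα₁ α₂ hα₂ h12
  obtain ⟨hα₁0, -⟩ := hα₁
  obtain ⟨hα₂0, -⟩ := hα₂
  set c : ℝ := α₂ - α₁ with hc_def
  have hc0 : 0 ≤ c := by simp only [hc_def]; linarith
  set P₁ : Matrix (Fin n) (Fin n) ℝ := α₁ • K + s • 1 with hP₁_def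
  set P₂ : Matrix (Fin n) (Fin n) ℝ := α₂ • K + s • 1 with hP₂_def
  set G : Matrix (Fin n) (Fin n) ℝ := (α₁ * α₂) • K + (s * (α₁ + α₂)) • 1 with hG_def
  -- transposes / symmetry
  have hKt : Kᵀ = K := by
    ext i j
    simpa using congrFun (congrFun hK.1 i) j
  have hP₁t : P₁ᵀ = P₁ := by
    simp [hP₁_def, transpose_add, transpose_smul, hKt]
  have hP₂t : P₂ᵀ = P₂ := by
    simp [hP₂_def, transpose_add, transpose_smul, hKt]
  -- positive definiteness
  have hone : (1 : Matrix (Fin n) (Fin n) ℝ).PosDef := Matrix.PosDef.one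
  have hsone : ((s : ℝ) • (1 : Matrix (Fin n) (Fin n) ℝ)).PosDef := by
    refine posDef_iff_dotProduct_mulVec.mpr ⟨?_, ?_⟩
    · unfold Matrix.IsHermitian
      simp
    · intro x hx
      simp only [smul_mulVec, dotProduct_smul, one_mulVec, smul_eq_mul]
      exact mul_pos hs (by simpa using hone.dotProduct_mulVec_pos hx)
  have hP₁pd : P₁.PosDef := Matrix.PosDef.posSemidef_add (rio_psd_smul hK hα₁0.le) hsone
  have hP₂pd : P₂.PosDef := Matrix.PosDef.posSemidef_add (rio_psd_smul hK hα₂0.le) hsone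
  have hGpsd : G.PosSemidef :=
    (rio_psd_smul hK (by positivity : (0:ℝ) ≤ α₁ * α₂)).add
      (rio_psd_smul hone.posSemidef (by positivity : (0:ℝ) ≤ s * (α₁ + α₂)))
  have hu₁ : IsUnit P₁.det := hP₁pd.det_pos.ne'.isUnit
  have hu₂ : IsUnit P₂.det := hP₂pd.det_pos.ne'.isUnit
  -- commutation
  have hcomm : P₁ * P₂ = P₂ * P₁ := by
    simp only [hP₁_def, hP₂_def, add_mul, mul_add, smul_mul_assoc, mul_smul_comm,
      Matrix.one_mul, Matrix.mul_one, smul_smul]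
    module
  have hcomm' : P₂ * P₁⁻¹ = P₁⁻¹ * P₂ := by
    have h : P₁⁻¹ * ((P₁ * P₂) * P₁⁻¹) = P₁⁻¹ * ((P₂ * P₁) * P₁⁻¹) := by rw [hcomm]
    rw [Matrix.mul_assoc P₂ P₁ P₁⁻¹, P₁.mul_nonsing_inv hu₁, Matrix.mul_one,
      Matrix.mul_assoc P₁ P₂ P₁⁻¹, ← Matrix.mul_assoc P₁⁻¹ P₁ (P₂ * P₁⁻¹),
      P₁.nonsing_inv_mul hu₁, Matrix.one_mul] at h
    exact h
  -- polynomial identity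
  have hpoly : P₂ * P₁ - K * G = (s * s) • 1 := by
    simp only [hP₁_def, hP₂_def, hG_def, add_mul, mul_add, smul_mul_assoc, mul_smul_comm,
      Matrix.one_mul, Matrix.mul_one, smul_smul]
    module
  -- the difference matrix
  set D : Matrix (Fin n) (Fin n) ℝ := α₂ ^ 2 • P₂⁻¹ - α₁ ^ 2 • P₁⁻¹ with hD_def
  have hDt : Dᵀ = D := by
    simp only [hD_def, transpose_sub, transpose_smul, transpose_nonsing_inv, hP₁t, hP₂t]
  have hcG : α₂ ^ 2 • P₁ - α₁ ^ 2 • P₂ = c • G := by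
    simp only [hP₁_def, hP₂_def, hG_def, hc_def, smul_add, smul_smul]
    module
  have hX : P₁ * (P₂ * D) = c • G := by
    rw [hD_def, Matrix.mul_sub, Matrix.mul_sub, Matrix.mul_smul, Matrix.mul_smul,
      Matrix.mul_smul, Matrix.mul_smul, P₂.mul_nonsing_inv hu₂, Matrix.mul_one, hcomm',
      ← Matrix.mul_assoc, P₁.mul_nonsing_inv hu₁, Matrix.one_mul, hcG]
  have hY : D * P₂ * P₁ = c • G := by
    rw [hD_def, Matrix.sub_mul, Matrix.sub_mul, Matrix.smul_mul, Matrix.smul_mul,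
      Matrix.smul_mul, Matrix.smul_mul, P₂.nonsing_inv_mul hu₂, Matrix.one_mul,
      Matrix.mul_assoc P₁⁻¹ P₂ P₁, ← hcomm, ← Matrix.mul_assoc, P₁.nonsing_inv_mul hu₁,
      Matrix.one_mul, hcG]
  -- W and the master identity
  set W : Matrix (Fin n) (Fin n) ℝ := P₁ * P₂ with hW_def
  have hWt : Wᵀ = P₂ * P₁ := by rw [hW_def, transpose_mul, hP₁t, hP₂t]
  have hWpd : W.PosDef := by
    have hexp : W = ((α₁ * α₂) • (K * K) + (s * (α₁ + α₂)) • K) + (s * s) • 1 := by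
      simp only [hW_def, hP₁_def, hP₂_def, add_mul, mul_add, smul_mul_assoc, mul_smul_comm,
        Matrix.one_mul, Matrix.mul_one, smul_smul]
      module
    rw [hexp]
    have hKK : (K * K).PosSemidef := by
      have := hK.pow 2
      rwa [pow_two] at this
    refine Matrix.PosDef.posSemidef_add ?_ ?_
    · exact (rio_psd_smul hKK (by positivity)).add (rio_psd_smul hK (by positivity))
    · refine posDef_iff_dotProduct_mulVec.mpr ⟨?_, ?_⟩
      · unfold Matrix.IsHermitian; simp
      · intro x hx
        simp only [smul_mulVec, dotProduct_smul, one_mulVec, smul_eq_mul]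
        exact mul_pos (by positivity) (by simpa using hone.dotProduct_mulVec_pos hx)
  have hWu : IsUnit W.det := hWpd.det_pos.ne'.isUnit
  have hWtu : IsUnit Wᵀ.det := by rwa [Matrix.det_transpose]
  set E : Matrix (Fin n) (Fin n) ℝ := c • D - D * K * D with hE_def
  have hMaster : W * E * Wᵀ = (c ^ 2 * s ^ 2) • G := by
    rw [hE_def, hWt, hW_def]
    rw [Matrix.mul_sub, Matrix.sub_mul, Matrix.mul_smul, Matrix.smul_mul]
    have t1 : P₁ * P₂ * D * (P₂ * P₁) = c • (G * (P₂ * P₁)) := by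
      rw [Matrix.mul_assoc P₁ P₂ D, hX, Matrix.smul_mul]
    have t2 : P₁ * P₂ * (D * K * D) * (P₂ * P₁) = (c * c) • (G * (K * G)) := by
      calc P₁ * P₂ * (D * K * D) * (P₂ * P₁)
          = (P₁ * (P₂ * D)) * K * (D * P₂ * P₁) := by
            simp only [Matrix.mul_assoc]
        _ = (c • G) * K * (c • G) := by rw [hX, hY]
        _ = (c * c) • (G * (K * G)) := by
            simp [Matrix.smul_mul, Matrix.mul_smul, smul_smul, Matrix.mul_assoc]
    rw [t1, t2, smul_smul, ← smul_sub, ← Matrix.mul_sub, hpoly]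
    rw [mul_smul_comm, Matrix.mul_one]
    rw [smul_smul]
    ring_nf
  have hE_eq : E = W⁻¹ * ((c ^ 2 * s ^ 2) • G) * (W⁻¹)ᴴ := by
    have h1 : (W⁻¹)ᴴ = (Wᵀ)⁻¹ := by
      rw [conjTranspose_eq_transpose_of_trivial, transpose_nonsing_inv]
    rw [h1, ← hMaster, ← Matrix.mul_assoc, ← Matrix.mul_assoc, W.nonsing_inv_mul hWu,
      Matrix.one_mul, Matrix.mul_assoc, Wᵀ.mul_nonsing_inv hWtu, Matrix.mul_one]
  have hEpsd : E.PosSemidef := by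
    rw [hE_eq]
    exact (rio_psd_smul hGpsd (by positivity)).mul_mul_conjTranspose_same W⁻¹
  -- quadratic form manipulations
  set u : Fin n → ℝ := D *ᵥ kstar with hu_def
  set q : ℝ := kstar ⬝ᵥ u with hq_def
  have h2 : u ⬝ᵥ K *ᵥ u = kstar ⬝ᵥ (D * K * D) *ᵥ kstar := by
    calc u ⬝ᵥ K *ᵥ u = (kstar ᵥ* D) ⬝ᵥ (K * D) *ᵥ kstar := by
          rw [hu_def, mulVec_mulVec]
          congr 1
          rw [← mulVec_transpose, hDt]
      _ = kstar ⬝ᵥ (D * (K * D)) *ᵥ kstar := by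
          rw [← dotProduct_mulVec, mulVec_mulVec]
      _ = kstar ⬝ᵥ (D * K * D) *ᵥ kstar := by rw [Matrix.mul_assoc]
  have h3 : kstar ⬝ᵥ E *ᵥ kstar ≥ 0 := by simpa using hEpsd.dotProduct_mulVec_nonneg kstar
  have h3' : kstar ⬝ᵥ (D * K * D) *ᵥ kstar ≤ c * q := by
    rw [hE_def] at h3
    rw [sub_mulVec, dotProduct_sub, smul_mulVec, dotProduct_smul] at h3
    simp only [smul_eq_mul] at h3
    linarith
  have h4 : q ^ 2 ≤ κ * (c * q) := by
    have := rio_discrim K κ kstar hbord u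
    have hmono : κ * (u ⬝ᵥ K *ᵥ u) ≤ κ * (c * q) := by
      apply mul_le_mul_of_nonneg_left _ hκ
      rw [h2]; exact h3'
    calc q ^ 2 = (kstar ⬝ᵥ u) ^ 2 := by rw [hq_def]
      _ ≤ κ * (u ⬝ᵥ K *ᵥ u) := this
      _ ≤ κ * (c * q) := hmono
  have hqle : q ≤ c * κ := by
    rcases le_or_gt q 0 with h | h
    · exact h.trans (mul_nonneg hc0 hκ)
    · nlinarith [h4]
  -- converting the goal
  have hBinv : ∀ (α : ℝ), 0 < α → ∀ (P : Matrix (Fin n) (Fin n) ℝ), P = α • K + s • 1 →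
      IsUnit P.det → (K + (s / α) • (1 : Matrix (Fin n) (Fin n) ℝ))⁻¹ = α • P⁻¹ := by
    intro α hα P hP hPu
    apply Matrix.inv_eq_right_inv
    have hscale : α • (K + (s / α) • (1 : Matrix (Fin n) (Fin n) ℝ)) = P := by
      rw [hP, smul_add, smul_smul]
      congr 2
      field_simp
    calc (K + (s / α) • (1 : Matrix (Fin n) (Fin n) ℝ)) * (α • P⁻¹)
        = (α • (K + (s / α) • (1 : Matrix (Fin n) (Fin n) ℝ))) * P⁻¹ := by
          rw [Matrix.mul_smul, Matrix.smul_mul]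
      _ = P * P⁻¹ := by rw [hscale]
      _ = 1 := P.mul_nonsing_inv hPu
  have hB₁ : (K + (s / α₁) • (1 : Matrix (Fin n) (Fin n) ℝ))⁻¹ = α₁ • P₁⁻¹ :=
    hBinv α₁ hα₁0 P₁ hP₁_def hu₁
  have hB₂ : (K + (s / α₂) • (1 : Matrix (Fin n) (Fin n) ℝ))⁻¹ = α₂ • P₂⁻¹ :=
    hBinv α₂ hα₂0 P₂ hP₂_def hu₂
  have hqsplit : q = α₂ ^ 2 * (kstar ⬝ᵥ P₂⁻¹ *ᵥ kstar) - α₁ ^ 2 * (kstar ⬝ᵥ P₁⁻¹ *ᵥ kstar) := by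
    rw [hq_def, hu_def, hD_def, sub_mulVec, dotProduct_sub, smul_mulVec, smul_mulVec,
      dotProduct_smul, dotProduct_smul]
    simp
  show α₁ * (κ - kstar ⬝ᵥ (K + (s / α₁) • (1 : Matrix (Fin n) (Fin n) ℝ))⁻¹ *ᵥ kstar)
      ≤ α₂ * (κ - kstar ⬝ᵥ (K + (s / α₂) • (1 : Matrix (Fin n) (Fin n) ℝ))⁻¹ *ᵥ kstar)
  rw [hB₁, hB₂]
  rw [smul_mulVec, smul_mulVec, dotProduct_smul, dotProduct_smul]
  set q₁ : ℝ := kstar ⬝ᵥ P₁⁻¹ *ᵥ kstar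
  set q₂ : ℝ := kstar ⬝ᵥ P₂⁻¹ *ᵥ kstar
  simp only [smul_eq_mul]
  nlinarith [hqle, hqsplit]
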